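/- Let $d=2m+1\ge 5$, $n\ge k\ge d$, and define $h_i = \binom{k-d+i}{i}+(n-k)\binom{k-d+i-1}{i-1}$ for $0\le i\le m$ and $h_i = h_{d-i}$ for $m< i\le d$. Then the sequence $(h_0,\ldots,h_d)$ is symmetric ($h_i=h_{d-i}$), satisfies $h_0=1$, $h_1 = n-d+1$, and is unimodal: $h_0\le h_1\le\cdots\le h_m$. -/
import Mathlib


/-- Integer binomial coefficient, zero outside the range `0 ≤ b ≤ a`. -/
def ch (a b : ℤ) : ℤ := if 0 ≤ b ∧ b ≤ a then ((a.toNat).choose b.toNat : ℤ) else 0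

lemma ch_coe (a b : ℕ) : ch (a : ℤ) (b : ℤ) = (a.choose b : ℤ) := by
  unfold ch
  split_ifs with hab
  · simp
  · push_neg at hab
    have h1 : (a : ℤ) < b := hab (by positivity)
    have : a < b := by exact_mod_cast h1
    rw [Nat.choose_eq_zero_of_lt this]
    simp

lemma ch_neg (a b : ℤ) (hb : b < 0) : ch a b = 0 := by
  unfold ch
  split_ifs with hab
  · omega
  · rfl

lemma choose_mono (c j : ℕ) : (c + j).choose j ≤ (c + j + 1).choose (j + 1) := by
  rw [Nat.choose_succ_succ]
  omega

/-- The toric `h`-vector of the ordinary polytope `P^{d,k,n}`, `d = 2m+1 ≥ 5`,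
`d ≤ k ≤ n`: with `h_i = C(k-d+i,i) + (n-k)C(k-d+i-1,i-1)` for `i ≤ m` and
`h_i = h_{d-i}` for `i > m`, the sequence is symmetric, has `h_0 = 1`,
`h_1 = n-d+1`, and is unimodal up to the middle. -/
theorem ordinary_h_vector_properties (d m k n : ℕ) (hd : d = 2 * m + 1) (hd5 : 5 ≤ d)
    (hk : d ≤ k) (hn : k ≤ n) (h : ℕ → ℤ)
    (hdef : ∀ i ≤ m,
      h i = ch ((k : ℤ) - d + i) (i : ℤ) + ((n : ℤ) - k) * ch ((k : ℤ) - d + i - 1) ((i : ℤ) - 1))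
    (hsym : ∀ i, m < i → i ≤ d → h i = h (d - i)) :
    (∀ i ≤ d, h i = h (d - i)) ∧ h 0 = 1 ∧ h 1 = (n : ℤ) - d + 1 ∧
      (∀ i, 1 ≤ i → i ≤ m → h (i - 1) ≤ h i) := by
  set c := k - d with hc
  have hck : (k : ℤ) - d = (c : ℤ) := by omega
  -- a clean formula for h i when 1 ≤ i ≤ m
  have hval : ∀ i, 1 ≤ i → i ≤ m →
      h i = ((c + i).choose i : ℤ) + ((n - k : ℕ) : ℤ) * ((c + (i - 1)).choose (i - 1) : ℤ) := by
    intro i h1 hm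
    rw [hdef i hm]
    have e1 : (k : ℤ) - d + i = ((c + i : ℕ) : ℤ) := by push_cast; omega
    have e2 : (k : ℤ) - d + i - 1 = ((c + (i - 1) : ℕ) : ℤ) := by push_cast; omega
    have e3 : (i : ℤ) - 1 = ((i - 1 : ℕ) : ℤ) := by push_cast; omega
    have e4 : (n : ℤ) - k = ((n - k : ℕ) : ℤ) := by omega
    rw [e2, e1, e3, e4, ch_coe, ch_coe]
  have h0 : h 0 = 1 := by
    rw [hdef 0 (by omega)]
    have hkd : (d : ℤ) ≤ (k : ℤ) := by exact_mod_cast hk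
    simp only [Nat.cast_zero, add_zero, zero_sub]
    rw [ch_neg _ _ (by norm_num : (-1:ℤ) < 0)]
    have : ch ((k : ℤ) - d) 0 = 1 := by
      unfold ch
      rw [if_pos ⟨le_refl 0, by omega⟩]
      simp
    rw [this]
    ring
  refine ⟨?_, h0, ?_, ?_⟩
  · intro i hi
    by_cases him : m < i
    · exact hsym i him hi
    · push_neg at him
      have hdi : m < d - i := by omega
      have := hsym (d - i) hdi (by omega)
      have e : d - (d - i) = i := by omega
      rw [e] at this
      exact this.symm
  · have hm1 : 1 ≤ m := by omega
    rw [hval 1 le_rfl hm1]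
    norm_num [Nat.choose_one_right]
    omega
  · intro i h1 hm
    rcases Nat.lt_or_ge i 2 with hi2 | hi2
    · -- i = 1
      have hi1 : i = 1 := by omega
      subst hi1
      simp only [Nat.sub_self]
      rw [h0, hval 1 le_rfl hm]
      have : (1 : ℤ) ≤ ((c + 1).choose 1 : ℤ) := by
        simp [Nat.choose_one_right]
      have hnk : (0 : ℤ) ≤ ((n - k : ℕ) : ℤ) * ((c + (1 - 1)).choose (1 - 1) : ℤ) := by positivity
      omega
    · rw [hval i h1 hm, hval (i - 1) (by omega) (by omega)]
      have e1 : i - 1 - 1 = i - 2 := by omega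
      rw [e1]
      have key1 : (c + (i - 1)).choose (i - 1) ≤ (c + i).choose i := by
        have := choose_mono c (i - 1)
        have e : i - 1 + 1 = i := by omega
        rwa [e, show c + (i-1) + 1 = c + i by omega] at this
      have key2 : (c + (i - 2)).choose (i - 2) ≤ (c + (i - 1)).choose (i - 1) := by
        have := choose_mono c (i - 2)
        have e : i - 2 + 1 = i - 1 := by omega
        rwa [e, show c + (i-2) + 1 = c + (i-1) by omega] at this
      have hnk : (0 : ℤ) ≤ ((n - k : ℕ) : ℤ) := by positivity
      have k1 : ((c + (i - 1)).choose (i - 1) : ℤ) ≤ ((c + i).choose i : ℤ) := by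
        exact_mod_cast key1
      have k2 : ((n - k : ℕ) : ℤ) * ((c + (i - 2)).choose (i - 2) : ℤ) ≤
          ((n - k : ℕ) : ℤ) * ((c + (i - 1)).choose (i - 1) : ℤ) := by
        apply mul_le_mul_of_nonneg_left _ hnk
        exact_mod_cast key2
      omega
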